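/- Let A1 and A2 be TABG over the same signature Σ with the same flat theory E. Then one can construct a TABG A with theory E such that L(A) = L(A1) ∩ L(A2); i.e. the class of TABG languages modulo the same equational theory is closed under intersection. -/

import Mathlib

set_option maxHeartbeats 1000000

namespace TreeAut

/-! ### Ranked terms -/

/-- Ranked terms over a symbol type `F` (arities are imposed by well-formedness). -/
inductive RTerm (F : Type) : Type
  | node : F → List (RTerm F) → RTerm F

namespace RTerm

def rootLabel {F : Type} : RTerm F → F
  | .node f _ => f

/-- `SubAt t p s` : the subterm of `t` at position `p` is `s`. -/
inductive SubAt {F : Type} : RTerm F → List ℕ → RTerm F → Prop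
  | refl (t : RTerm F) : SubAt t [] t
  | step {f : F} {ts : List (RTerm F)} {i : ℕ} {u s : RTerm F} {p : List ℕ} :
      ts[i]? = some u → SubAt u p s → SubAt (RTerm.node f ts) (i :: p) s

/-- `p` is a position of `t`. -/
def IsPos {F : Type} (t : RTerm F) (p : List ℕ) : Prop := ∃ s, SubAt t p s

/-- `ReplAt t p s t'` : `t'` is the result of replacing in `t` the subterm at `p` by `s`. -/
inductive ReplAt {F : Type} : RTerm F → List ℕ → RTerm F → RTerm F → Prop
  | here (t s : RTerm F) : ReplAt t [] s s
  | step {f : F} {ts : List (RTerm F)} {i : ℕ} {u u' s : RTerm F} {p : List ℕ} :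
      ts[i]? = some u → ReplAt u p s u' →
      ReplAt (RTerm.node f ts) (i :: p) s (RTerm.node f (ts.set i u'))

/-- Height of a term: the maximal length of a position. -/
def height {F : Type} : RTerm F → ℕ
  | .node _ [] => 0
  | .node f (t :: ts) => max (height t + 1) (height (RTerm.node f ts))

/-- Well-formedness of a term with respect to an arity function. -/
inductive WF {F : Type} (ar : F → ℕ) : RTerm F → Prop
  | node {f : F} {ts : List (RTerm F)} :
      ts.length = ar f → (∀ u ∈ ts, WF ar u) → WF ar (RTerm.node f ts)

/-- A constant, i.e. a term reduced to a symbol (of arity 0). -/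
def IsConst {F : Type} (t : RTerm F) : Prop := ∃ c : F, t = RTerm.node c []

/-- Relabeling of a term. -/
def map {F G : Type} (g : F → G) : RTerm F → RTerm G
  | .node f ts => RTerm.node (g f) (ts.attach.map (fun u => map g u.1))
decreasing_by
  simp only [RTerm.node.sizeOf_spec]
  have := List.sizeOf_lt_of_mem u.2
  omega

end RTerm

/-! ### Patterns (terms with variables) and flat equational theories -/

/-- Terms with variables (variables are natural numbers). -/
inductive Pat (F : Type) : Type
  | var : ℕ → Pat F
  | node : F → List (Pat F) → Pat F

namespace Pat

def subst {F : Type} (σ : ℕ → RTerm F) : Pat F → RTerm F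
  | .var v => σ v
  | .node f ps => RTerm.node f (ps.attach.map (fun p => subst σ p.1))
decreasing_by
  simp only [Pat.node.sizeOf_spec]
  have := List.sizeOf_lt_of_mem p.2
  omega

def height {F : Type} : Pat F → ℕ
  | .var _ => 0
  | .node _ [] => 0
  | .node f (p :: ps) => max (height p + 1) (height (Pat.node f ps))

inductive HasVar {F : Type} (v : ℕ) : Pat F → Prop
  | var : HasVar v (Pat.var v)
  | node {f : F} {ps : List (Pat F)} {p : Pat F} :
      p ∈ ps → HasVar v p → HasVar v (Pat.node f ps)

inductive WF {F : Type} (ar : F → ℕ) : Pat F → Prop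
  | var (v : ℕ) : WF ar (Pat.var v)
  | node {f : F} {ps : List (Pat F)} :
      ps.length = ar f → (∀ p ∈ ps, WF ar p) → WF ar (Pat.node f ps)

end Pat

/-- A flat equation: both sides well-formed, of the same height which is at most 1,
and with the same variables. -/
def IsFlatEq {F : Type} (ar : F → ℕ) (e : Pat F × Pat F) : Prop :=
  e.1.WF ar ∧ e.2.WF ar ∧ e.1.height = e.2.height ∧ e.1.height ≤ 1 ∧
  (∀ v : ℕ, Pat.HasVar v e.1 ↔ Pat.HasVar v e.2)

/-- One rewrite step using an equation of `E` (in either direction) at some position. -/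
def Rew {F : Type} (E : List (Pat F × Pat F)) (s t : RTerm F) : Prop :=
  ∃ l r : Pat F, ((l, r) ∈ E ∨ (r, l) ∈ E) ∧
    ∃ (σ : ℕ → RTerm F) (p : List ℕ),
      RTerm.SubAt s p (l.subst σ) ∧ RTerm.ReplAt s p (r.subst σ) t

/-- Equivalence modulo the set of equations `E`. -/
def EqE {F : Type} (E : List (Pat F × Pat F)) : RTerm F → RTerm F → Prop :=
  Relation.ReflTransGen (Rew E)

/-! ### Global constraints -/

/-- Transition rule of a tree automaton with constraints between brothers:
`sym(args) → res` with brother equalities `bcEq` and disequalities `bcNeq`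
(1-based indices of children). -/
structure Rule (F Q : Type) where
  sym : F
  args : List Q
  bcEq : List (ℕ × ℕ)
  bcNeq : List (ℕ × ℕ)
  res : Q

/-- Atomic global constraints: `q ≈ q'`, `q ≉ q'`, and linear inequalities
`Σ c·|q| ≥ a` (type `|.|`) and `Σ c·‖q‖ ≥ a` (type `‖.‖`). -/
inductive GAtom (Q : Type) : Type
  | eq : Q → Q → GAtom Q
  | neq : Q → Q → GAtom Q
  | cnt : List (ℤ × Q) → ℤ → GAtom Q
  | cls : List (ℤ × Q) → ℤ → GAtom Q

/-- Boolean combinations of atomic global constraints. -/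
inductive GC (Q : Type) : Type
  | tt : GC Q
  | ff : GC Q
  | atom : GAtom Q → GC Q
  | and : GC Q → GC Q → GC Q
  | or : GC Q → GC Q → GC Q
  | not : GC Q → GC Q

/-- The set of `=E`-equivalence classes of members of a set of terms. -/
def classesOf {F : Type} (E : List (Pat F × Pat F)) (S : Set (RTerm F)) :
    Set (Set (RTerm F)) :=
  {C | ∃ t ∈ S, C = {u | EqE E t u}}

section Sat

variable {β F Q : Type}

/-- Positions of a (run) tree where the node has state `q`
(`st` extracts the state of a node label). -/
def stPos (st : β → Q) (r : RTerm β) (q : Q) : Set (List ℕ) :=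
  {p | ∃ s, RTerm.SubAt r p s ∧ st s.rootLabel = q}

/-- `⟦|q|⟧` : the number of positions with state `q`. -/
noncomputable def stCount (st : β → Q) (r : RTerm β) (q : Q) : ℕ :=
  (stPos st r q).ncard

/-- Terms occurring below positions with state `q`. -/
def stTerms (st : β → Q) (sy : β → F) (r : RTerm β) (q : Q) : Set (RTerm F) :=
  {t | ∃ p s, RTerm.SubAt r p s ∧ st s.rootLabel = q ∧ s.map sy = t}

/-- `⟦‖q‖⟧` : the number of `=E`-classes of terms at positions with state `q`. -/
noncomputable def clsCount (E : List (Pat F × Pat F)) (st : β → Q) (sy : β → F)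
    (r : RTerm β) (q : Q) : ℕ :=
  (classesOf E (stTerms st sy r q)).ncard

/-- Satisfaction of a global atomic constraint by a run tree. -/
def satAtom (E : List (Pat F × Pat F)) (st : β → Q) (sy : β → F) (r : RTerm β) :
    GAtom Q → Prop
  | .eq q q' => ∀ p p' s s', p ≠ p' → RTerm.SubAt r p s → RTerm.SubAt r p' s' →
      st s.rootLabel = q → st s'.rootLabel = q' → EqE E (s.map sy) (s'.map sy)
  | .neq q q' => ∀ p p' s s', p ≠ p' → RTerm.SubAt r p s → RTerm.SubAt r p' s' →
      st s.rootLabel = q → st s'.rootLabel = q' → ¬ EqE E (s.map sy) (s'.map sy)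
  | .cnt l a => a ≤ (l.map (fun cq => cq.1 * (stCount st r cq.2 : ℤ))).sum
  | .cls l a => a ≤ (l.map (fun cq => cq.1 * (clsCount E st sy r cq.2 : ℤ))).sum

/-- Satisfaction of a global constraint by a run tree. -/
def satGC (E : List (Pat F × Pat F)) (st : β → Q) (sy : β → F) (r : RTerm β) :
    GC Q → Prop
  | .tt => True
  | .ff => False
  | .atom a => satAtom E st sy r a
  | .and c d => satGC E st sy r c ∧ satGC E st sy r d
  | .or c d => satGC E st sy r c ∨ satGC E st sy r d
  | .not c => ¬ satGC E st sy r c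

end Sat

/-! ### Tree automata with global and brother constraints modulo a flat theory -/

/-- A run is represented as a tree labeled by the rules applied at each position. -/
abbrev Run (F Q : Type) := RTerm (Rule F Q)

def Run.state {F Q : Type} (r : Run F Q) : Q := (RTerm.rootLabel r).res
def Run.term {F Q : Type} (r : Run F Q) : RTerm F := r.map Rule.sym

/-- `r` is a structurally correct run using rules of `Δ`, whose local brother
constraints are satisfied modulo `E`. -/
inductive IsRun {F Q : Type} (Δ : List (Rule F Q)) (E : List (Pat F × Pat F)) :
    Run F Q → Prop
  | node {ρ : Rule F Q} {rs : List (Run F Q)} :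
      ρ ∈ Δ →
      ρ.args = rs.map Run.state →
      (∀ r ∈ rs, IsRun Δ E r) →
      (∀ i j ri rj, (i, j) ∈ ρ.bcEq → rs[i - 1]? = some ri →
        rs[j - 1]? = some rj → EqE E ri.term rj.term) →
      (∀ i j ri rj, (i, j) ∈ ρ.bcNeq → rs[i - 1]? = some ri →
        rs[j - 1]? = some rj → ¬ EqE E ri.term rj.term) →
      IsRun Δ E (RTerm.node ρ rs)

/-- Tree automaton with brother constraints and global constraints modulo a flat theory. -/
structure TABG (F Q : Type) where
  arity : F → ℕ
  stQ : Finset Q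
  rules : List (Rule F Q)
  final : List Q
  eqs : List (Pat F × Pat F)
  gc : GC Q

def TABG.IsAccRun {F Q : Type} (A : TABG F Q) (r : Run F Q) : Prop :=
  IsRun A.rules A.eqs r ∧ satGC A.eqs Rule.res Rule.sym r A.gc ∧ r.state ∈ A.final

def TABG.Lang {F Q : Type} (A : TABG F Q) : Set (RTerm F) :=
  {t | ∃ r : Run F Q, A.IsAccRun r ∧ r.term = t}

def Rule.WFr {F Q : Type} (ar : F → ℕ) (S : Finset Q) (ρ : Rule F Q) : Prop :=
  ρ.args.length = ar ρ.sym ∧ ρ.res ∈ S ∧ (∀ q ∈ ρ.args, q ∈ S) ∧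
  (∀ ij ∈ ρ.bcEq, 1 ≤ ij.1 ∧ ij.1 ≤ ρ.args.length ∧ 1 ≤ ij.2 ∧ ij.2 ≤ ρ.args.length) ∧
  (∀ ij ∈ ρ.bcNeq, 1 ≤ ij.1 ∧ ij.1 ≤ ρ.args.length ∧ 1 ≤ ij.2 ∧ ij.2 ≤ ρ.args.length)

/-- Well-formedness of a TABG: the equational theory is flat, the rules respect
the arities and the state set, and final states belong to the state set. -/
def TABG.WF {F Q : Type} (A : TABG F Q) : Prop :=
  (∀ e ∈ A.eqs, IsFlatEq A.arity e) ∧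
  (∀ ρ ∈ A.rules, ρ.WFr A.arity A.stQ) ∧
  (∀ q ∈ A.final, q ∈ A.stQ)

/-! ### Classes of constraints -/

def GAtom.IsEqNeq {Q : Type} : GAtom Q → Prop
  | .eq _ _ => True
  | .neq _ _ => True
  | .cnt _ _ => False
  | .cls _ _ => False

/-- All coefficients and the constant have the same sign. -/
def sameSign (l : List ℤ) (a : ℤ) : Prop :=
  ((∀ c ∈ l, 0 ≤ c) ∧ 0 ≤ a) ∨ ((∀ c ∈ l, c ≤ 0) ∧ a ≤ 0)

/-- eq/neq atoms and *natural* linear inequalities. -/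
def GAtom.IsNat {Q : Type} : GAtom Q → Prop
  | .eq _ _ => True
  | .neq _ _ => True
  | .cnt l a => sameSign (l.map Prod.fst) a
  | .cls l a => sameSign (l.map Prod.fst) a

/-- eq/neq atoms and natural linear inequalities over the `|q|` only. -/
def GAtom.IsNatCnt {Q : Type} : GAtom Q → Prop
  | .eq _ _ => True
  | .neq _ _ => True
  | .cnt l a => sameSign (l.map Prod.fst) a
  | .cls _ _ => False

def GC.AtomsAre {Q : Type} (P : GAtom Q → Prop) : GC Q → Prop
  | .tt => True
  | .ff => True
  | .atom a => P a
  | .and c d => GC.AtomsAre P c ∧ GC.AtomsAre P d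
  | .or c d => GC.AtomsAre P c ∧ GC.AtomsAre P d
  | .not c => GC.AtomsAre P c

/-- Positive conjunctive constraint: a conjunction of atoms. -/
def GC.IsConjAtoms {Q : Type} : GC Q → Prop
  | .tt => True
  | .ff => False
  | .atom _ => True
  | .and c d => GC.IsConjAtoms c ∧ GC.IsConjAtoms d
  | .or _ _ => False
  | .not _ => False

/-- A literal: an atom (with natural arithmetic atoms) or the negation of an
eq/neq atom. -/
def GC.IsLit {Q : Type} : GC Q → Prop
  | .atom a => GAtom.IsNat a
  | .not (.atom (.eq _ _)) => True
  | .not (.atom (.neq _ _)) => True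
  | _ => False

def GC.IsConjLit {Q : Type} : GC Q → Prop
  | .and c d => GC.IsConjLit c ∧ GC.IsConjLit d
  | c => GC.IsLit c

def GC.IsDNF {Q : Type} : GC Q → Prop
  | .or c d => GC.IsDNF c ∧ GC.IsDNF d
  | c => GC.IsConjLit c

/-- Normalized constraint: `true`, `false`, or a disjunction of conjunctions of
literals in which all arithmetic literals are positive. -/
def GC.Normalized {Q : Type} (c : GC Q) : Prop :=
  c = GC.tt ∨ c = GC.ff ∨ GC.IsDNF c

/-- No reflexive disequality constraints (the TAGED restriction). -/
def GC.NoReflNeq {Q : Type} : GC Q → Prop :=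
  GC.AtomsAre (fun a => match a with
    | .neq q q' => q ≠ q'
    | _ => True)

def conjList {Q : Type} : List (GC Q) → GC Q
  | [] => GC.tt
  | [c] => c
  | c :: cs => GC.and c (conjList cs)

def disjList {Q : Type} : List (GC Q) → GC Q
  | [] => GC.ff
  | [c] => c
  | c :: cs => GC.or c (disjList cs)

/-- No local constraints between brothers. -/
def TABG.NoBrother {F Q : Type} (A : TABG F Q) : Prop :=
  ∀ ρ ∈ A.rules, ρ.bcEq = [] ∧ ρ.bcNeq = []

/-- A TAG: empty equational theory and no brother constraints. -/
def TABG.IsTAG {F Q : Type} (A : TABG F Q) : Prop := A.eqs = [] ∧ A.NoBrother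

/-- A plain tree automaton: a TAG with trivial global constraint. -/
def TABG.IsTA {F Q : Type} (A : TABG F Q) : Prop := A.IsTAG ∧ A.gc = GC.tt

/-! ### Synonym states -/

section Syn

variable {F Q : Type} [DecidableEq Q]

/-- Possible replacements of a state occurrence: `q̄` may stay or become `q̂`. -/
def replS (qb qh q : Q) : List Q := if q = qb then [qb, qh] else [q]

/-- Replacement of every occurrence of `|q̄|` (resp. `‖q̄‖`) by `|q̄| + |q̂|`
(resp. `‖q̄‖ + ‖q̂‖`) in a linear expression. -/
def linRepl (qb qh : Q) (l : List (ℤ × Q)) : List (ℤ × Q) :=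
  l.flatMap (fun cq => (replS qb qh cq.2).map (fun q' => (cq.1, q')))

/-- Literal transformation on positive atoms. -/
def synAtom (qb qh : Q) : GAtom Q → GC Q
  | .eq q1 q2 => conjList ((replS qb qh q1).flatMap (fun a =>
      (replS qb qh q2).map (fun b => GC.atom (GAtom.eq a b))))
  | .neq q1 q2 => conjList ((replS qb qh q1).flatMap (fun a =>
      (replS qb qh q2).map (fun b => GC.atom (GAtom.neq a b))))
  | .cnt l a => GC.atom (GAtom.cnt (linRepl qb qh l) a)
  | .cls l a => GC.atom (GAtom.cls (linRepl qb qh l) a)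

/-- The literal transformation `Ĉ` of (a normalized) constraint, for `q̄ ↝ q̂`. -/
def GC.synTrans (qb qh : Q) : GC Q → GC Q
  | .tt => .tt
  | .ff => .ff
  | .atom a => synAtom qb qh a
  | .not (.atom (.eq q1 q2)) => disjList ((replS qb qh q1).flatMap (fun a =>
      (replS qb qh q2).map (fun b => GC.not (GC.atom (GAtom.eq a b)))))
  | .not (.atom (.neq q1 q2)) => disjList ((replS qb qh q1).flatMap (fun a =>
      (replS qb qh q2).map (fun b => GC.not (GC.atom (GAtom.neq a b)))))
  | .not c => GC.not (GC.synTrans qb qh c)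
  | .and c d => GC.and (GC.synTrans qb qh c) (GC.synTrans qb qh d)
  | .or c d => GC.or (GC.synTrans qb qh c) (GC.synTrans qb qh d)

/-- All rules obtained from `ρ` by all possible replacements of occurrences of
`q̄` by `q̂`. -/
def Rule.synVars (qb qh : Q) (ρ : Rule F Q) : List (Rule F Q) :=
  (ρ.args.mapM (replS qb qh)).flatMap (fun args' =>
    (replS qb qh ρ.res).map (fun res' =>
      { sym := ρ.sym, args := args', bcEq := ρ.bcEq, bcNeq := ρ.bcNeq, res := res' }))

/-- `F_{q̄↝q̂}` on the list of final states. -/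
def finSyn (qb qh : Q) (l : List Q) : List Q := if qb ∈ l then qh :: l else l

/-- The constraint `‖q‖ = k`. -/
def clsEqC (q : Q) (k : ℤ) : GC Q :=
  GC.and (GC.atom (GAtom.cls [(1, q)] k)) (GC.atom (GAtom.cls [(-1, q)] (-k)))

/-- The automaton `A_{q̄↝q̂}`. -/
def TABG.synonym (A : TABG F Q) (qb qh : Q) : TABG F Q :=
  { arity := A.arity
    stQ := insert qh A.stQ
    rules := A.rules.flatMap (Rule.synVars qb qh)
    final := finSyn qb qh A.final
    eqs := A.eqs
    gc := GC.and
      (GC.or (GC.and (clsEqC qb 0) (clsEqC qh 0))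
             (GC.and (clsEqC qh 1) (GC.atom (GAtom.neq qb qh))))
      (GC.synTrans qb qh A.gc) }

end Syn

/-! ### Removal of the counting constraints `|q|` : the automaton `A_¬ℕ` -/

def GC.cntAtoms {Q : Type} : GC Q → List (List (ℤ × Q) × ℤ)
  | .atom (.cnt l a) => [(l, a)]
  | .and c d => GC.cntAtoms c ++ GC.cntAtoms d
  | .or c d => GC.cntAtoms c ++ GC.cntAtoms d
  | .not c => GC.cntAtoms c
  | _ => []

def GC.eqAtoms {Q : Type} : GC Q → List (Q × Q)
  | .atom (.eq q q') => [(q, q')]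
  | .and c d => GC.eqAtoms c ++ GC.eqAtoms d
  | .or c d => GC.eqAtoms c ++ GC.eqAtoms d
  | .not c => GC.eqAtoms c
  | _ => []

def GC.neqAtoms {Q : Type} : GC Q → List (Q × Q)
  | .atom (.neq q q') => [(q, q')]
  | .and c d => GC.neqAtoms c ++ GC.neqAtoms d
  | .or c d => GC.neqAtoms c ++ GC.neqAtoms d
  | .not c => GC.neqAtoms c
  | _ => []

/-- `max_A` : one plus the maximal constant occurring in the counting literals. -/
def GC.maxConst {Q : Type} (c : GC Q) : ℕ :=
  1 + ((c.cntAtoms.map (fun la => la.2.natAbs)).foldr max 0)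

/-- Truncated sum of two mappings `Q → {0,…,m}`. -/
def msumF {Q : Type} {m : ℕ} (M1 M2 : Q → Fin (m + 1)) : Q → Fin (m + 1) :=
  fun q => ⟨min ((M1 q : ℕ) + (M2 q : ℕ)) m, Nat.lt_succ_of_le (Nat.min_le_right _ _)⟩

/-- The mapping `M_q`. -/
def unitMap {Q : Type} [DecidableEq Q] (m : ℕ) (q : Q) : Q → Fin (m + 1) :=
  fun q' => if q' = q then ⟨min 1 m, Nat.lt_succ_of_le (Nat.min_le_right _ _)⟩
            else ⟨0, Nat.succ_pos m⟩

/-- Value of a linear expression under a mapping. -/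
def lvalF {Q : Type} {m : ℕ} (M : Q → Fin (m + 1)) (l : List (ℤ × Q)) : ℤ :=
  (l.map (fun cq => cq.1 * ((M cq.2 : ℕ) : ℤ))).sum

/-- All variants of a rule, decorated with occurrence-counting mappings. -/
noncomputable def Rule.notNVars {F Q : Type} [Fintype Q] [DecidableEq Q] (m : ℕ) (ρ : Rule F Q) :
    List (Rule F (Q × (Q → Fin (m + 1)))) :=
  ((ρ.args.mapM (fun q =>
      ((Finset.univ : Finset (Q → Fin (m + 1))).toList).map (fun M => (q, M))))).map
    (fun args' =>
      { sym := ρ.sym, args := args', bcEq := ρ.bcEq, bcNeq := ρ.bcNeq,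
        res := (ρ.res, (args'.map Prod.snd).foldr msumF (unitMap m ρ.res)) })

/-- The automaton `A_¬ℕ`. -/
noncomputable def TABG.notN {F Q : Type} [Fintype Q] [DecidableEq Q] (A : TABG F Q) :
    TABG F (Q × (Q → Fin (A.gc.maxConst + 1))) :=
  { arity := A.arity
    stQ := A.stQ ×ˢ (Finset.univ : Finset (Q → Fin (A.gc.maxConst + 1)))
    rules := A.rules.flatMap (Rule.notNVars A.gc.maxConst)
    final := (A.final.flatMap (fun q =>
        ((Finset.univ : Finset (Q → Fin (A.gc.maxConst + 1))).toList).map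
          (fun M => (q, M)))).filter
        (fun qM => decide (∀ la ∈ A.gc.cntAtoms, la.2 ≤ lvalF qM.2 la.1))
    eqs := A.eqs
    gc := GC.and
      (conjList ((A.gc.eqAtoms).flatMap (fun qq =>
        ((Finset.univ : Finset (Q → Fin (A.gc.maxConst + 1))).toList).flatMap (fun M1 =>
          ((Finset.univ : Finset (Q → Fin (A.gc.maxConst + 1))).toList).map (fun M2 =>
            GC.atom (GAtom.eq (qq.1, M1) (qq.2, M2)))))))
      (conjList ((A.gc.neqAtoms).flatMap (fun qq =>
        ((Finset.univ : Finset (Q → Fin (A.gc.maxConst + 1))).toList).flatMap (fun M1 =>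
          ((Finset.univ : Finset (Q → Fin (A.gc.maxConst + 1))).toList).map (fun M2 =>
            GC.atom (GAtom.neq (qq.1, M1) (qq.2, M2))))))) }

/-! ### Global pumpings -/

section Pump

variable {F Q : Type}

/-- `H_i` : positions of subruns of positive height equal to `i`. -/
def Hset (r : Run F Q) (i : ℕ) : Set (List ℕ) :=
  {p | ∃ s, RTerm.SubAt r p s ∧ 0 < RTerm.height s ∧ RTerm.height s = i}

/-- `Ȟ_i` : positions `p.j` of subruns of positive height `< i` whose parent has
height `> i`. -/
def Hcheck (r : Run F Q) (i : ℕ) : Set (List ℕ) :=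
  {p' | ∃ (p : List ℕ) (j : ℕ) (s s' : Run F Q), p' = p ++ [j] ∧
    RTerm.SubAt r p s ∧ RTerm.SubAt r p' s' ∧
    0 < RTerm.height s' ∧ RTerm.height s' < i ∧ i < RTerm.height s}

/-- `H̊_i` : positions `p.j` of subruns of height `0` (with `0 < i`) whose parent
has height `> i`. -/
def Hring (r : Run F Q) (i : ℕ) : Set (List ℕ) :=
  {p' | ∃ (p : List ℕ) (j : ℕ) (s s' : Run F Q), p' = p ++ [j] ∧
    RTerm.SubAt r p s ∧ RTerm.SubAt r p' s' ∧
    RTerm.height s' = 0 ∧ 0 < i ∧ i < RTerm.height s}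

def Dom (r : Run F Q) (i : ℕ) : Set (List ℕ) := Hset r i ∪ Hcheck r i ∪ Hring r i

/-- A pump-injection `I : (H_i ∪ Ȟ_i ∪ H̊_i) → (H_j ∪ Ȟ_j ∪ H̊_j)`. -/
structure PumpInj (E : List (Pat F × Pat F)) (r : Run F Q) (i j : ℕ)
    (I : List ℕ → List ℕ) : Prop where
  inj : Set.InjOn I (Dom r i)
  mapsH : Set.MapsTo I (Hset r i) (Hset r j)
  mapsHc : Set.MapsTo I (Hcheck r i) (Hcheck r j)
  mapsHr : Set.MapsTo I (Hring r i) (Hring r j)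
  idRing : ∀ p ∈ Hring r i, I p = p
  stPres : ∀ p ∈ Dom r i, ∀ s s', RTerm.SubAt r p s → RTerm.SubAt r (I p) s' →
    Run.state s = Run.state s'
  eqPres : ∀ p1 p2, p1 ∈ Dom r i → p2 ∈ Dom r i →
    ∀ s1 s2 s1' s2', RTerm.SubAt r p1 s1 → RTerm.SubAt r p2 s2 →
      RTerm.SubAt r (I p1) s1' → RTerm.SubAt r (I p2) s2' →
      (EqE E (Run.term s1) (Run.term s2) ↔ EqE E (Run.term s1') (Run.term s2'))

/-- Simultaneous replacement at all positions of `D` (which are assumed to be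
pairwise parallel): at a position of `D` the subtree is replaced by a tree
allowed by `ρ`, elsewhere the tree is kept. -/
inductive MultiRepl {β : Type} (D : Set (List ℕ)) (ρ : List ℕ → RTerm β → Prop) :
    List ℕ → RTerm β → RTerm β → Prop
  | here {p : List ℕ} {t t' : RTerm β} : p ∈ D → ρ p t' → MultiRepl D ρ p t t'
  | node {p : List ℕ} {f : β} {ts ts' : List (RTerm β)} :
      p ∉ D → ts.length = ts'.length →
      (∀ (k : ℕ) u u', ts[k]? = some u → ts'[k]? = some u' →
        MultiRepl D ρ (p ++ [k]) u u') →
      MultiRepl D ρ p (RTerm.node f ts) (RTerm.node f ts')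

/-- `r'` is the global pumping on `r` with indexes `i,j` and injection `I`. -/
def IsGlobalPumpingWith (E : List (Pat F × Pat F)) (r : Run F Q) (i j : ℕ)
    (I : List ℕ → List ℕ) (r' : Run F Q) : Prop :=
  PumpInj E r i j I ∧
  MultiRepl (Dom r i) (fun p s => RTerm.SubAt r (I p) s) [] r r'

/-- The `=E`-classes of the subterms at positions of `P`. -/
def classesAt (E : List (Pat F × Pat F)) (r : Run F Q) (P : Set (List ℕ)) :
    Set (Set (RTerm F)) :=
  classesOf E {t | ∃ p ∈ P, ∃ s, RTerm.SubAt r p s ∧ Run.term s = t}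

/-- The tuple `r_{t,P}` of a class `C`, as a function on states. -/
noncomputable def tupleAt (r : Run F Q) (P : Set (List ℕ)) (C : Set (RTerm F))
    (q : Q) : ℕ :=
  {p | p ∈ P ∧ ∃ s, RTerm.SubAt r p s ∧ Run.state s = q ∧ Run.term s ∈ C}.ncard

/-- The multiset ordering `r_P ≤ r_{P'}` : an injection on classes which is
dominating on the associated tuples. -/
def MsetLE (E : List (Pat F × Pat F)) (r : Run F Q) (P P' : Set (List ℕ)) : Prop :=
  ∃ φ : Set (RTerm F) → Set (RTerm F),
    Set.InjOn φ (classesAt E r P) ∧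
    Set.MapsTo φ (classesAt E r P) (classesAt E r P') ∧
    ∀ C ∈ classesAt E r P, ∀ q, tupleAt r P C q ≤ tupleAt r P' (φ C) q

end Pump

/-! ### Multisets of tuples of naturals (for the well quasi-ordering) -/

def TupLE {n : ℕ} (x y : Fin n → ℕ) : Prop := ∀ k, x k ≤ y k

/-- Multiset ordering: an injection mapping each element to a dominating one. -/
def MLE {n : ℕ} (S T : Multiset (Fin n → ℕ)) : Prop :=
  ∃ T' : Multiset (Fin n → ℕ), T' ≤ T ∧ Multiset.Rel TupLE S T'

def msumT {n : ℕ} (S : Multiset (Fin n → ℕ)) : ℕ :=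
  (S.map (fun x => ∑ k, x k)).sum

/-! ### Hedge automata with global constraints, and currying -/

/-- A finite word automaton over the alphabet `Q` (auxiliary states are naturals). -/
structure WordAut (Q : Type) where
  stS : Finset ℕ
  init : ℕ
  final : List ℕ
  trans : List (ℕ × Q × ℕ)

inductive WAccepts {Q : Type} (W : WordAut Q) : ℕ → List Q → Prop
  | nil {s : ℕ} : s ∈ W.final → WAccepts W s []
  | cons {s : ℕ} {q : Q} {s' : ℕ} {w : List Q} :
      (s, q, s') ∈ W.trans → WAccepts W s' w → WAccepts W s (q :: w)

def WordAut.Lang {Q : Type} (W : WordAut Q) (w : List Q) : Prop := WAccepts W W.init w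

/-- Transition rule `a(L) → q` of a hedge automaton. -/
structure HRule (F Q : Type) where
  sym : F
  wa : WordAut Q
  res : Q

/-- Hedge automaton with global constraints, over unranked ordered terms. -/
structure HAG (F Q : Type) where
  stQ : Finset Q
  rules : List (HRule F Q)
  final : List Q
  gc : GC Q

abbrev HRun (F Q : Type) := RTerm (HRule F Q)

def HRun.state {F Q : Type} (r : HRun F Q) : Q := (RTerm.rootLabel r).res
def HRun.term {F Q : Type} (r : HRun F Q) : RTerm F := r.map HRule.sym

inductive IsHRun {F Q : Type} (Δ : List (HRule F Q)) : HRun F Q → Prop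
  | node {ρ : HRule F Q} {rs : List (HRun F Q)} :
      ρ ∈ Δ → ρ.wa.Lang (rs.map HRun.state) →
      (∀ r ∈ rs, IsHRun Δ r) → IsHRun Δ (RTerm.node ρ rs)

def HAG.Lang {F Q : Type} (A : HAG F Q) : Set (RTerm F) :=
  {t | ∃ r : HRun F Q, IsHRun A.rules r ∧
        satGC ([] : List (Pat F × Pat F)) HRule.res HRule.sym r A.gc ∧
        HRun.state r ∈ A.final ∧ HRun.term r = t}

/-- The ranked signature `Σ_@` : symbols of `Σ` become constants, `none` is the
binary symbol `@`. -/
def arAt {F : Type} : Option F → ℕ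
  | none => 2
  | some _ => 0

/-- The `curry` encoding of unranked terms into ranked terms over `Σ_@`. -/
inductive Curried {F : Type} : RTerm F → RTerm (Option F) → Prop
  | base {a : F} : Curried (RTerm.node a []) (RTerm.node (some a) [])
  | step {a : F} {ts : List (RTerm F)} {t : RTerm F} {u v : RTerm (Option F)} :
      Curried (RTerm.node a ts) u → Curried t v →
      Curried (RTerm.node a (ts ++ [t])) (RTerm.node none [u, v])

/-! ### Concrete signatures and languages -/

/-- The signature `{a:0, s:1, f:2}` (resp. `{a:0, g:1, f:2}`): symbol `0` has
arity 0, symbol `1` arity 1, symbol `2` arity 2. -/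
def ar3 : Fin 3 → ℕ := ![0, 1, 2]

/-- `iter1 n` is `s^n(a)` (resp. `g^n(a)`). -/
def iter1 : ℕ → RTerm (Fin 3)
  | 0 => RTerm.node 0 []
  | n + 1 => RTerm.node 1 [iter1 n]

/-- `chain [n1,…,nk] = f(s^{n1}(a), f(s^{n2}(a), …, f(s^{nk}(a), a)…))`. -/
def chain : List ℕ → RTerm (Fin 3)
  | [] => RTerm.node 0 []
  | n :: ns => RTerm.node 2 [iter1 n, chain ns]

/-- The language of chains with pairwise distinct exponents. -/
def LKey : Set (RTerm (Fin 3)) := {t | ∃ ns : List ℕ, ns.Nodup ∧ t = chain ns}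

/-- `bracket [n1,…,nk] = f(g^{n1}(a), f(…, f(g^{n_{k−1}}(a), g^{n_k}(a))…))`. -/
def bracket : List ℕ → RTerm (Fin 3)
  | [] => RTerm.node 0 []
  | [n] => iter1 n
  | n :: ns => RTerm.node 2 [iter1 n, bracket ns]

/-- Every entry has exactly one partner with the same value. -/
def ExactlyOnePartner (ns : List ℕ) : Prop :=
  ∀ i, i < ns.length → ∃! j, j < ns.length ∧ j ≠ i ∧ ns[i]? = ns[j]?

def LDup : Set (RTerm (Fin 3)) :=
  {t | ∃ ns : List ℕ, ns ≠ [] ∧ ExactlyOnePartner ns ∧ t = bracket ns}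

/-! ### Concrete, codable presentations of automata -/

abbrev RuleData := ℕ × List ℕ × List (ℕ × ℕ) × List (ℕ × ℕ) × ℕ
abbrev PatAtomData := ℕ ⊕ ℕ
abbrev FlatSideData := PatAtomData ⊕ (ℕ × List PatAtomData)
abbrev LinData := List (ℤ × ℕ) × ℤ
abbrev GAtomData := (ℕ × ℕ) ⊕ ((ℕ × ℕ) ⊕ (LinData ⊕ LinData))
abbrev GCNodeData := GAtomData ⊕ (ℕ × ℕ × ℕ)
abbrev TABGData :=
  List (ℕ × ℕ) × List RuleData × List ℕ × List (FlatSideData × FlatSideData) ×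
    List GCNodeData

def decodePatAtom : PatAtomData → Pat ℕ
  | Sum.inl v => Pat.var v
  | Sum.inr c => Pat.node c []

def decodeSide : FlatSideData → Pat ℕ
  | Sum.inl a => decodePatAtom a
  | Sum.inr (f, l) => Pat.node f (l.map decodePatAtom)

def decodeGAtom : GAtomData → GAtom ℕ
  | Sum.inl (q, q') => GAtom.eq q q'
  | Sum.inr (Sum.inl (q, q')) => GAtom.neq q q'
  | Sum.inr (Sum.inr (Sum.inl (l, a))) => GAtom.cnt l a
  | Sum.inr (Sum.inr (Sum.inr (l, a))) => GAtom.cls l a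

def decodeGC (nodes : List GCNodeData) : ℕ → ℕ → GC ℕ
  | 0, _ => GC.tt
  | fuel + 1, i =>
    match nodes[i]? with
    | some (Sum.inl a) => GC.atom (decodeGAtom a)
    | some (Sum.inr (op, l, rr)) =>
      if op = 0 then GC.tt
      else if op = 1 then GC.ff
      else if op = 2 then GC.and (decodeGC nodes fuel l) (decodeGC nodes fuel rr)
      else if op = 3 then GC.or (decodeGC nodes fuel l) (decodeGC nodes fuel rr)
      else GC.not (decodeGC nodes fuel l)
    | none => GC.tt

def decodeRule : RuleData → Rule ℕ ℕ
  | (f, args, be, bn, q) => ⟨f, args, be, bn, q⟩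

def decodeArity (sig : List (ℕ × ℕ)) : ℕ → ℕ :=
  fun f => (((sig.find? (fun p => p.1 == f)).map Prod.snd).getD 0)

def dataStates (rules : List RuleData) (final : List ℕ) : Finset ℕ :=
  (rules.flatMap (fun r => r.2.2.2.2 :: r.2.1)).toFinset ∪ final.toFinset

/-- Decoding of a full TABG with arbitrary Boolean global constraint. -/
def decodeTABG (d : TABGData) : TABG ℕ ℕ :=
  { arity := decodeArity d.1
    stQ := dataStates d.2.1 d.2.2.1
    rules := d.2.1.map decodeRule
    final := d.2.2.1
    eqs := d.2.2.2.1.map (fun e => (decodeSide e.1, decodeSide e.2))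
    gc := decodeGC d.2.2.2.2 (d.2.2.2.2).length 0 }

/-- Data for a `TAG^∧[≈]` : signature, rules (no brother constraints), final
states, and a conjunction of equational atoms `q ≈ q'`. -/
abbrev TAGCEData := List (ℕ × ℕ) × List (ℕ × List ℕ × ℕ) × List ℕ × List (ℕ × ℕ)

def decodeTAGCE (d : TAGCEData) : TABG ℕ ℕ :=
  { arity := decodeArity d.1
    stQ := (d.2.1.flatMap (fun r => r.2.2 :: r.2.1)).toFinset ∪ d.2.2.1.toFinset
    rules := d.2.1.map (fun r => ⟨r.1, r.2.1, [], [], r.2.2⟩)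
    final := d.2.2.1
    eqs := []
    gc := conjList (d.2.2.2.map (fun qq => GC.atom (GAtom.eq qq.1 qq.2))) }

/-- Data for a `TAG^∧[≈, |.|_ℤ]` : as above plus a conjunction of integer linear
inequalities. -/
abbrev TAGCZData :=
  List (ℕ × ℕ) × List (ℕ × List ℕ × ℕ) × List ℕ × List (ℕ × ℕ) × List LinData

def decodeTAGCZ (d : TAGCZData) : TABG ℕ ℕ :=
  { arity := decodeArity d.1
    stQ := (d.2.1.flatMap (fun r => r.2.2 :: r.2.1)).toFinset ∪ d.2.2.1.toFinset
    rules := d.2.1.map (fun r => ⟨r.1, r.2.1, [], [], r.2.2⟩)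
    final := d.2.2.1
    eqs := []
    gc := conjList
      (d.2.2.2.1.map (fun qq => GC.atom (GAtom.eq qq.1 qq.2)) ++
       d.2.2.2.2.map (fun la => GC.atom (GAtom.cnt la.1 la.2))) }

/-- A tree language over the ranked signature `ar` is regular if it is the
language of a plain tree automaton. -/
def IsRegular (ar : ℕ → ℕ) (L : Set (RTerm ℕ)) : Prop :=
  ∃ (n : ℕ) (B : TABG ℕ (Fin n)), B.arity = ar ∧ B.WF ∧ B.IsTA ∧ B.Lang = L

/-! ### Automata classes as predicates -/

/-- A TAGED: a TAG whose constraint is a conjunction of atoms `q ≈ q'`, `q ≉ q'`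
without reflexive disequalities. -/
def TAGEDCond {F Q : Type} (A : TABG F Q) : Prop :=
  A.IsTAG ∧ A.gc.IsConjAtoms ∧ A.gc.AtomsAre GAtom.IsEqNeq ∧ A.gc.NoReflNeq

/-- A positive conjunctive TAG with eq/neq atoms (`TAG^∧[≈,≉]`). -/
def TAGCwCond {F Q : Type} (A : TABG F Q) : Prop :=
  A.IsTAG ∧ A.gc.IsConjAtoms ∧ A.gc.AtomsAre GAtom.IsEqNeq

end TreeAut

namespace TreeAut

open RTerm

section Basic
variable {F β γ : Type}

lemma map_node (g : β → γ) (f : β) (ts : List (RTerm β)) :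
    (RTerm.node f ts).map g = RTerm.node (g f) (ts.map (RTerm.map g)) := by
  rw [RTerm.map]
  simp

lemma subAt_det {t s s' : RTerm β} {p : List ℕ} (h : SubAt t p s) (h' : SubAt t p s') :
    s = s' := by
  induction h with
  | refl => cases h'; rfl
  | step hget hsub ih =>
    cases h' with
    | step hget' hsub' =>
      rw [hget] at hget'
      cases hget'
      exact ih hsub'

lemma subAt_map (g : β → γ) {t s : RTerm β} {p : List ℕ} (h : SubAt t p s) :
    SubAt (t.map g) p (s.map g) := by
  induction h with
  | refl => exact SubAt.refl _
  | @step f ts i u s p hget hsub ih =>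
    rw [map_node]
    exact SubAt.step (by rw [List.getElem?_map, hget]; rfl) ih

lemma subAt_nil {β : Type} {t s : RTerm β} (h : SubAt t [] s) : s = t := by
  cases h; rfl

lemma subAt_map_inv (g : β → γ) {t : RTerm β} {u : RTerm γ} {p : List ℕ}
    (h : SubAt (t.map g) p u) : ∃ s, SubAt t p s ∧ u = s.map g := by
  induction p generalizing t with
  | nil => exact ⟨t, SubAt.refl _, subAt_nil h⟩
  | cons i p ih =>
    obtain ⟨f, ts⟩ := t
    rw [map_node] at h
    cases h with
    | step hget hsub =>
      rw [List.getElem?_map] at hget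
      obtain ⟨ti, hti, rfl⟩ : ∃ ti, ts[i]? = some ti ∧ _ := by
        cases hts : ts[i]? with
        | none => rw [hts] at hget; simp at hget
        | some ti => rw [hts] at hget; exact ⟨ti, rfl, (Option.some_inj.mp hget).symm⟩
      obtain ⟨s, hs, rfl⟩ := ih hsub
      exact ⟨s, SubAt.step hti hs, rfl⟩

end Basic

section Zip
variable {F Q1 Q2 : Type}

def pairRule (ρ1 : Rule F Q1) (ρ2 : Rule F Q2) : Rule F (Q1 × Q2) :=
  ⟨ρ1.sym, ρ1.args.zip ρ2.args, ρ1.bcEq ++ ρ2.bcEq, ρ1.bcNeq ++ ρ2.bcNeq, (ρ1.res, ρ2.res)⟩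

def zipRun : Run F Q1 → Run F Q2 → Run F (Q1 × Q2)
  | .node ρ1 ts1, .node ρ2 ts2 =>
      .node (pairRule ρ1 ρ2) ((ts1.zip ts2).attach.map (fun p => zipRun p.1.1 p.1.2))
termination_by r1 _ => sizeOf r1
decreasing_by
  obtain ⟨⟨u, v⟩, hm⟩ := p
  have := List.sizeOf_lt_of_mem (List.of_mem_zip hm).1
  simp only [RTerm.node.sizeOf_spec]
  omega

lemma zipRun_node (ρ1 : Rule F Q1) (ts1 : List (Run F Q1)) (ρ2 : Rule F Q2)
    (ts2 : List (Run F Q2)) :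
    zipRun (.node ρ1 ts1) (.node ρ2 ts2) =
      .node (pairRule ρ1 ρ2) ((ts1.zip ts2).map (fun p => zipRun p.1 p.2)) := by
  simp only [zipRun]
  congr 1
  calc ((ts1.zip ts2).attach.map (fun p => zipRun p.1.1 p.1.2))
      = ((ts1.zip ts2).attach.map Subtype.val).map (fun p => zipRun p.1 p.2) := by
        rw [List.map_map]; rfl
    _ = _ := by rw [List.attach_map_subtype_val]

lemma state_zipRun (u : Run F Q1) (v : Run F Q2) :
    (zipRun u v).state = (u.state, v.state) := by
  obtain ⟨ρ1, ts1⟩ := u; obtain ⟨ρ2, ts2⟩ := v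
  rw [zipRun_node]
  rfl

end Zip

open RTerm

section Zip2
variable {F Q1 Q2 : Type}

lemma mem_zip_index {α β : Type*} {l1 : List α} {l2 : List β} {u : α × β}
    (h : u ∈ l1.zip l2) : ∃ i : ℕ, l1[i]? = some u.1 ∧ l2[i]? = some u.2 := by
  obtain ⟨i, hi, hu⟩ := List.mem_iff_getElem.mp h
  have := List.getElem?_zip_eq_some.mp
    (show (l1.zip l2)[i]? = some (u.1, u.2) by rw [List.getElem?_eq_getElem hi, hu])
  exact ⟨i, by exact this.1,
            by exact this.2⟩

lemma map_eq_map_get {α β γ : Type*} {l1 : List α} {l2 : List β} {f : α → γ} {g : β → γ}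
    (h : l1.map f = l2.map g) {i : ℕ} {a : α} {b : β}
    (ha : l1[i]? = some a) (hb : l2[i]? = some b) : f a = g b := by
  have := congrArg (fun l => l[i]?) h
  simp only [List.getElem?_map, ha, hb, Option.map_some] at this
  exact Option.some_inj.mp this

lemma term_node {Q : Type} (ρ : Rule F Q) (ts : List (Run F Q)) :
    Run.term (RTerm.node ρ ts) = RTerm.node ρ.sym (ts.map Run.term) :=
  map_node _ _ _

lemma zip_get? {α β : Type*} {l1 : List α} {l2 : List β} {i : ℕ} {x : α × β} :
    (l1.zip l2)[i]? = some x ↔ l1[i]? = some x.1 ∧ l2[i]? = some x.2 := by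
  constructor
  · intro h
    exact List.getElem?_zip_eq_some.mp (by rw [h])
  · intro ⟨h1, h2⟩
    exact List.getElem?_zip_eq_some.mpr ⟨h1, h2⟩

/-- get? of children of `zipRun`. -/
lemma zipChildren_get? {ts1 : List (Run F Q1)} {ts2 : List (Run F Q2)} {i : ℕ}
    {x : Run F (Q1 × Q2)} :
    ((ts1.zip ts2).map (fun p => zipRun p.1 p.2))[i]? = some x ↔
      ∃ u v, ts1[i]? = some u ∧ ts2[i]? = some v ∧ x = zipRun u v := by
  constructor
  · intro h
    rw [List.getElem?_map] at h
    cases hz : (ts1.zip ts2)[i]? with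
    | none => rw [hz] at h; exact absurd h (by simp)
    | some p =>
      obtain ⟨h1, h2⟩ := zip_get?.mp hz
      refine ⟨p.1, p.2, h1, h2, ?_⟩
      rw [hz] at h
      simp only [Option.map_some] at h
      exact (Option.some_inj.mp h).symm
  · rintro ⟨u, v, h1, h2, rfl⟩
    have hz : (ts1.zip ts2)[i]? = some (u, v) := zip_get? (x := (u, v)) |>.mpr ⟨h1, h2⟩
    rw [List.getElem?_map, hz, Option.map_some]

theorem term_zipRun : ∀ (u : Run F Q1) (v : Run F Q2), Run.term u = Run.term v →
    Run.term (zipRun u v) = Run.term u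
  | .node ρ1 ts1, .node ρ2 ts2, h => by
    rw [zipRun_node, term_node, term_node]
    rw [term_node, term_node] at h
    obtain ⟨hsym, hts⟩ := RTerm.node.inj h
    have hlen : ts1.length = ts2.length := by
      have := congrArg List.length hts; simpa using this
    congr 1
    rw [List.map_map]
    have step1 : (ts1.zip ts2).map (Run.term ∘ fun p => zipRun p.1 p.2) =
        (ts1.zip ts2).map (fun p => Run.term p.1) := by
      apply List.map_congr_left
      intro p hp
      obtain ⟨i, h1, h2⟩ := mem_zip_index hp
      have hterm : Run.term p.1 = Run.term p.2 := map_eq_map_get hts h1 h2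
      have hmem : p.1 ∈ ts1 := (List.of_mem_zip hp).1
      exact term_zipRun p.1 p.2 hterm
    rw [step1]
    have : (ts1.zip ts2).map (fun p => Run.term p.1) =
        ((ts1.zip ts2).map Prod.fst).map Run.term := by rw [List.map_map]; rfl
    rw [this, List.map_fst_zip (le_of_eq hlen)]
termination_by u => sizeOf u
decreasing_by
  have := List.sizeOf_lt_of_mem hmem
  simp only [RTerm.node.sizeOf_spec]
  omega

lemma subAt_zipRun_inv {r1 : Run F Q1} {r2 : Run F Q2} {p : List ℕ} {s : Run F (Q1 × Q2)}
    (h : SubAt (zipRun r1 r2) p s) :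
    ∃ s1 s2, SubAt r1 p s1 ∧ SubAt r2 p s2 ∧ s = zipRun s1 s2 := by
  induction p generalizing r1 r2 with
  | nil => exact ⟨r1, r2, SubAt.refl _, SubAt.refl _, subAt_nil h⟩
  | cons i p ih =>
    obtain ⟨ρ1, ts1⟩ := r1; obtain ⟨ρ2, ts2⟩ := r2
    rw [zipRun_node] at h
    cases h with
    | step hget hsub =>
      obtain ⟨u, v, h1, h2, rfl⟩ := zipChildren_get?.mp hget
      obtain ⟨s1, s2, hs1, hs2, rfl⟩ := ih hsub
      exact ⟨s1, s2, SubAt.step h1 hs1, SubAt.step h2 hs2, rfl⟩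

lemma subAt_zipRun {r1 : Run F Q1} {r2 : Run F Q2} {p : List ℕ} {s1 : Run F Q1}
    {s2 : Run F Q2} (h1 : SubAt r1 p s1) (h2 : SubAt r2 p s2) :
    SubAt (zipRun r1 r2) p (zipRun s1 s2) := by
  induction p generalizing r1 r2 with
  | nil => rw [subAt_nil h1, subAt_nil h2]; exact SubAt.refl _
  | cons i p ih =>
    obtain ⟨ρ1, ts1⟩ := r1; obtain ⟨ρ2, ts2⟩ := r2
    cases h1 with
    | step hg1 hs1 =>
      cases h2 with
      | step hg2 hs2 =>
        rw [zipRun_node]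
        exact SubAt.step (zipChildren_get?.mpr ⟨_, _, hg1, hg2, rfl⟩) (ih hs1 hs2)

lemma isRun_subAt {Q : Type} {Δ : List (Rule F Q)} {E : List (Pat F × Pat F)}
    {r s : Run F Q} {p : List ℕ} (h : IsRun Δ E r) (hs : SubAt r p s) : IsRun Δ E s := by
  induction hs with
  | refl => exact h
  | step hget hsub ih =>
    cases h with
    | node hρ hargs hch hbe hbn =>
      exact ih (hch _ (List.mem_of_getElem? hget))

lemma term_eq_of_subAt {Qa Qb : Type} {r1 : Run F Qa} {r2 : Run F Qb}
    (h : Run.term r1 = Run.term r2) {p : List ℕ} {s1 : Run F Qa} {s2 : Run F Qb}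
    (h1 : SubAt r1 p s1) (h2 : SubAt r2 p s2) : Run.term s1 = Run.term s2 := by
  have a1 : SubAt (Run.term r1) p (Run.term s1) := subAt_map Rule.sym h1
  have a2 : SubAt (Run.term r1) p (Run.term s2) := by rw [h]; exact subAt_map Rule.sym h2
  exact subAt_det a1 a2

end Zip2

open RTerm

section GCLift
variable {F : Type}

lemma satGC_conjList {β Q : Type} (E : List (Pat F × Pat F)) (st : β → Q) (sy : β → F)
    (r : RTerm β) (l : List (GC Q)) :
    satGC E st sy r (conjList l) ↔ ∀ c ∈ l, satGC E st sy r c := by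
  induction l with
  | nil => simp [conjList, satGC]
  | cons c cs ih =>
    cases cs with
    | nil => simp [conjList]
    | cons d ds =>
      show satGC E st sy r (GC.and c (conjList (d :: ds))) ↔ _
      rw [show satGC E st sy r (GC.and c (conjList (d :: ds))) =
        (satGC E st sy r c ∧ satGC E st sy r (conjList (d :: ds))) from rfl, ih]
      simp

lemma atomsAre_conjList {Q : Type} (P : GAtom Q → Prop) (l : List (GC Q))
    (h : ∀ c ∈ l, GC.AtomsAre P c) : GC.AtomsAre P (conjList l) := by
  induction l with
  | nil => trivial
  | cons c cs ih =>
    cases cs with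
    | nil => exact h c (by simp)
    | cons d ds =>
      exact ⟨h c (by simp), ih (fun x hx => h x (List.mem_cons_of_mem _ hx))⟩

def liftGC {Q Q' P : Type} (S : List Q') (pr : Q → Q' → P) : GC Q → GC P
  | .tt => .tt
  | .ff => .ff
  | .atom (.eq q q') => conjList (S.flatMap fun a => S.map fun b =>
      GC.atom (GAtom.eq (pr q a) (pr q' b)))
  | .atom (.neq q q') => conjList (S.flatMap fun a => S.map fun b =>
      GC.atom (GAtom.neq (pr q a) (pr q' b)))
  | .atom (.cnt _ _) => .tt
  | .atom (.cls _ _) => .tt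
  | .and c d => .and (liftGC S pr c) (liftGC S pr d)
  | .or c d => .or (liftGC S pr c) (liftGC S pr d)
  | .not c => .not (liftGC S pr c)

lemma atomsAre_liftGC {Q Q' P : Type} (S : List Q') (pr : Q → Q' → P) (c : GC Q) :
    GC.AtomsAre GAtom.IsEqNeq (liftGC S pr c) := by
  induction c with
  | tt => trivial
  | ff => trivial
  | atom a =>
    cases a with
    | eq q q' =>
      exact atomsAre_conjList _ _ (by
        intro x hx
        simp only [List.mem_flatMap, List.mem_map] at hx
        obtain ⟨a, _, b, _, rfl⟩ := hx
        trivial)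
    | neq q q' =>
      exact atomsAre_conjList _ _ (by
        intro x hx
        simp only [List.mem_flatMap, List.mem_map] at hx
        obtain ⟨a, _, b, _, rfl⟩ := hx
        trivial)
    | cnt l a => trivial
    | cls l a => trivial
  | and c d ihc ihd => exact ⟨ihc, ihd⟩
  | or c d ihc ihd => exact ⟨ihc, ihd⟩
  | not c ihc => exact ihc

/-- Generic transfer of eq/neq global constraints along a projection. -/
lemma satGC_lift_iff {Qa Q' P : Type} (E : List (Pat F × Pat F)) (S : List Q')
    (pr : Qa → Q' → P) (π : P → Qa) (hπ : ∀ q a, π (pr q a) = q)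
    (r : Run F P) (r0 : Run F Qa)
    (hpos : ∀ p s, SubAt r p s → ∃ s0, SubAt r0 p s0 ∧
      π (Run.state s) = Run.state s0 ∧ Run.term s = Run.term s0)
    (hpos' : ∀ p s0, SubAt r0 p s0 → ∃ s a, SubAt r p s ∧ a ∈ S ∧
      Run.state s = pr (Run.state s0) a ∧ Run.term s = Run.term s0) :
    ∀ c : GC Qa, c.AtomsAre GAtom.IsEqNeq →
      (satGC E Rule.res Rule.sym r (liftGC S pr c) ↔ satGC E Rule.res Rule.sym r0 c) := by
  intro c hc
  induction c with
  | tt => exact Iff.rfl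
  | ff => exact Iff.rfl
  | atom a =>
    cases a with
    | eq q q' =>
      show satGC E Rule.res Rule.sym r (conjList _) ↔ satAtom E Rule.res Rule.sym r0 _
      rw [satGC_conjList]
      constructor
      · intro hconj
        intro p p' s0 s0' hne hs0 hs0' hq hq'
        obtain ⟨s, a, hs, haS, hst, hterm⟩ := hpos' p s0 hs0
        obtain ⟨s', b, hs', hbS, hst', hterm'⟩ := hpos' p' s0' hs0'
        have hmem : GC.atom (GAtom.eq (pr q a) (pr q' b)) ∈
            S.flatMap fun a => S.map fun b => GC.atom (GAtom.eq (pr q a) (pr q' b)) := by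
          simp only [List.mem_flatMap, List.mem_map]
          exact ⟨a, haS, b, hbS, rfl⟩
        have := hconj _ hmem p p' s s' hne hs hs'
          (by rw [show Rule.res (RTerm.rootLabel s) = Run.state s from rfl, hst,
                show Run.state s0 = Rule.res (RTerm.rootLabel s0) from rfl, hq])
          (by rw [show Rule.res (RTerm.rootLabel s') = Run.state s' from rfl, hst',
                show Run.state s0' = Rule.res (RTerm.rootLabel s0') from rfl, hq'])
        show EqE E (Run.term s0) (Run.term s0')
        rw [← hterm, ← hterm']
        exact this
      · intro hat x hx
        simp only [List.mem_flatMap, List.mem_map] at hx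
        obtain ⟨a, _, b, _, rfl⟩ := hx
        intro p p' s s' hne hs hs' hq hq'
        obtain ⟨s0, hs0, hst, hterm⟩ := hpos p s hs
        obtain ⟨s0', hs0', hst', hterm'⟩ := hpos p' s' hs'
        have h1 : Rule.res (RTerm.rootLabel s0) = q := by
          show Run.state s0 = q
          rw [← hst]; show π (Rule.res (RTerm.rootLabel s)) = q
          rw [hq, hπ]
        have h1' : Rule.res (RTerm.rootLabel s0') = q' := by
          show Run.state s0' = q'
          rw [← hst']; show π (Rule.res (RTerm.rootLabel s')) = q'
          rw [hq', hπ]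
        have := hat p p' s0 s0' hne hs0 hs0' h1 h1'
        show EqE E (Run.term s) (Run.term s')
        rw [hterm, hterm']
        exact this
    | neq q q' =>
      show satGC E Rule.res Rule.sym r (conjList _) ↔ satAtom E Rule.res Rule.sym r0 _
      rw [satGC_conjList]
      constructor
      · intro hconj
        intro p p' s0 s0' hne hs0 hs0' hq hq'
        obtain ⟨s, a, hs, haS, hst, hterm⟩ := hpos' p s0 hs0
        obtain ⟨s', b, hs', hbS, hst', hterm'⟩ := hpos' p' s0' hs0'
        have hmem : GC.atom (GAtom.neq (pr q a) (pr q' b)) ∈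
            S.flatMap fun a => S.map fun b => GC.atom (GAtom.neq (pr q a) (pr q' b)) := by
          simp only [List.mem_flatMap, List.mem_map]
          exact ⟨a, haS, b, hbS, rfl⟩
        have := hconj _ hmem p p' s s' hne hs hs'
          (by rw [show Rule.res (RTerm.rootLabel s) = Run.state s from rfl, hst,
                show Run.state s0 = Rule.res (RTerm.rootLabel s0) from rfl, hq])
          (by rw [show Rule.res (RTerm.rootLabel s') = Run.state s' from rfl, hst',
                show Run.state s0' = Rule.res (RTerm.rootLabel s0') from rfl, hq'])
        show ¬ EqE E (Run.term s0) (Run.term s0')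
        rw [← hterm, ← hterm']
        exact this
      · intro hat x hx
        simp only [List.mem_flatMap, List.mem_map] at hx
        obtain ⟨a, _, b, _, rfl⟩ := hx
        intro p p' s s' hne hs hs' hq hq'
        obtain ⟨s0, hs0, hst, hterm⟩ := hpos p s hs
        obtain ⟨s0', hs0', hst', hterm'⟩ := hpos p' s' hs'
        have h1 : Rule.res (RTerm.rootLabel s0) = q := by
          show Run.state s0 = q
          rw [← hst]; show π (Rule.res (RTerm.rootLabel s)) = q
          rw [hq, hπ]
        have h1' : Rule.res (RTerm.rootLabel s0') = q' := by
          show Run.state s0' = q'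
          rw [← hst']; show π (Rule.res (RTerm.rootLabel s')) = q'
          rw [hq', hπ]
        have := hat p p' s0 s0' hne hs0 hs0' h1 h1'
        show ¬ EqE E (Run.term s) (Run.term s')
        rw [hterm, hterm']
        exact this
    | cnt l a => exact absurd hc id
    | cls l a => exact absurd hc id
  | and c d ihc ihd =>
    exact and_congr (ihc hc.1) (ihd hc.2)
  | or c d ihc ihd =>
    exact or_congr (ihc hc.1) (ihd hc.2)
  | not c ihc =>
    exact not_congr (ihc hc)

end GCLift

open RTerm

section Struct
variable {F Q1 Q2 : Type}

lemma get?_map_some {α β : Type*} {l : List α} {f : α → β} {k : ℕ} {b : β} :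
    (l.map f)[k]? = some b ↔ ∃ a, l[k]? = some a ∧ f a = b := by
  rw [List.getElem?_map, Option.map_eq_some_iff]

lemma zip_fst_snd {α β : Type*} : ∀ l : List (α × β),
    (l.map Prod.fst).zip (l.map Prod.snd) = l
  | [] => rfl
  | (a, b) :: l => by simp [zip_fst_snd l]

theorem zip_isRun {Δ1 : List (Rule F Q1)} {Δ2 : List (Rule F Q2)}
    {Δ : List (Rule F (Q1 × Q2))} {E : List (Pat F × Pat F)}
    (hΔ : ∀ ρ1 ∈ Δ1, ∀ ρ2 ∈ Δ2, ρ1.sym = ρ2.sym → ρ1.args.length = ρ2.args.length →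
      pairRule ρ1 ρ2 ∈ Δ) :
    ∀ (r1 : Run F Q1) (r2 : Run F Q2), IsRun Δ1 E r1 → IsRun Δ2 E r2 →
      Run.term r1 = Run.term r2 → IsRun Δ E (zipRun r1 r2)
  | .node ρ1 ts1, .node ρ2 ts2, h1, h2, hterm => by
    rw [term_node, term_node] at hterm
    obtain ⟨hsym, hts⟩ := RTerm.node.inj hterm
    have hlen : ts1.length = ts2.length := by
      have := congrArg List.length hts; simpa using this
    cases h1 with
    | node hρ1 hargs1 hch1 hbe1 hbn1 =>
      cases h2 with
      | node hρ2 hargs2 hch2 hbe2 hbn2 =>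
        have hargslen : ρ1.args.length = ρ2.args.length := by
          rw [hargs1, hargs2]; simpa using hlen
        rw [zipRun_node]
        have hclstate : ((ts1.zip ts2).map (fun p => zipRun p.1 p.2)).map Run.state =
            (ts1.zip ts2).map (fun p => (Run.state p.1, Run.state p.2)) := by
          rw [List.map_map]
          exact List.map_congr_left (fun p _ => state_zipRun p.1 p.2)
        have htermp : ∀ p ∈ ts1.zip ts2, Run.term p.1 = Run.term p.2 := by
          intro p hp
          obtain ⟨i, hi1, hi2⟩ := mem_zip_index hp
          exact map_eq_map_get hts hi1 hi2
        refine IsRun.node (hΔ _ hρ1 _ hρ2 hsym hargslen) ?_ ?_ ?_ ?_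
        · show ρ1.args.zip ρ2.args = _
          rw [hargs1, hargs2, List.zip_map, hclstate]
          rfl
        · intro x hx
          rw [List.mem_map] at hx
          obtain ⟨p, hp, rfl⟩ := hx
          have hm1 : p.1 ∈ ts1 := (List.of_mem_zip hp).1
          exact zip_isRun hΔ p.1 p.2 (hch1 _ hm1) (hch2 _ (List.of_mem_zip hp).2)
            (htermp p hp)
        · intro i j ri rj hij hgi hgj
          obtain ⟨ui, vi, hui, hvi, rfl⟩ := zipChildren_get?.mp hgi
          obtain ⟨uj, vj, huj, hvj, rfl⟩ := zipChildren_get?.mp hgj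
          have htermi : Run.term ui = Run.term vi := map_eq_map_get hts hui hvi
          have htermj : Run.term uj = Run.term vj := map_eq_map_get hts huj hvj
          rw [term_zipRun _ _ htermi, term_zipRun _ _ htermj]
          rcases List.mem_append.mp hij with h | h
          · exact hbe1 i j ui uj h hui huj
          · rw [htermi, htermj]
            exact hbe2 i j vi vj h hvi hvj
        · intro i j ri rj hij hgi hgj
          obtain ⟨ui, vi, hui, hvi, rfl⟩ := zipChildren_get?.mp hgi
          obtain ⟨uj, vj, huj, hvj, rfl⟩ := zipChildren_get?.mp hgj
          have htermi : Run.term ui = Run.term vi := map_eq_map_get hts hui hvi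
          have htermj : Run.term uj = Run.term vj := map_eq_map_get hts huj hvj
          rw [term_zipRun _ _ htermi, term_zipRun _ _ htermj]
          rcases List.mem_append.mp hij with h | h
          · exact hbn1 i j ui uj h hui huj
          · rw [htermi, htermj]
            exact hbn2 i j vi vj h hvi hvj
termination_by r1 _ => sizeOf r1
decreasing_by
  have := List.sizeOf_lt_of_mem hm1
  simp only [RTerm.node.sizeOf_spec]
  omega

lemma list_unzip_choice {α β : Type*} {g : β → α} {Q : β → Prop} :
    ∀ rs : List α, (∀ x ∈ rs, ∃ y, x = g y ∧ Q y) →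
      ∃ l : List β, rs = l.map g ∧ ∀ y ∈ l, Q y := by
  intro rs
  induction rs with
  | nil => exact fun _ => ⟨[], rfl, by simp⟩
  | cons x xs ih =>
    intro h
    obtain ⟨y, hy, hQ⟩ := h x (List.mem_cons_self)
    obtain ⟨l, hl, hQl⟩ := ih (fun z hz => h z (List.mem_cons_of_mem _ hz))
    refine ⟨y :: l, by rw [List.map_cons, ← hy, ← hl], ?_⟩
    intro z hz
    rcases List.mem_cons.mp hz with rfl | hz
    · exact hQ
    · exact hQl z hz

theorem unzip_isRun {Δ1 : List (Rule F Q1)} {Δ2 : List (Rule F Q2)}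
    {Δ : List (Rule F (Q1 × Q2))} {E : List (Pat F × Pat F)}
    (hΔ : ∀ ρ ∈ Δ, ∃ ρ1, ρ1 ∈ Δ1 ∧ ∃ ρ2, ρ2 ∈ Δ2 ∧ ρ1.sym = ρ2.sym ∧
      ρ1.args.length = ρ2.args.length ∧ ρ = pairRule ρ1 ρ2)
    {r : Run F (Q1 × Q2)} (h : IsRun Δ E r) :
    ∃ r1 r2, IsRun Δ1 E r1 ∧ IsRun Δ2 E r2 ∧ Run.term r1 = Run.term r2 ∧
      r = zipRun r1 r2 := by
  induction h with
  | @node ρ rs hρ hargs hch hbe hbn ih =>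
    obtain ⟨ρ1, hρ1, ρ2, hρ2, hsym, hlenargs, rfl⟩ := hΔ _ hρ
    obtain ⟨l, rfl, hQ⟩ := list_unzip_choice
      (g := fun y : Run F Q1 × Run F Q2 => zipRun y.1 y.2)
      (Q := fun y : Run F Q1 × Run F Q2 =>
        (IsRun Δ1 E y.1 ∧ IsRun Δ2 E y.2 ∧ Run.term y.1 = Run.term y.2))
      rs (by
        intro x hx
        obtain ⟨r1, r2, h1, h2, ht, hx'⟩ := ih x hx
        exact ⟨(r1, r2), hx', h1, h2, ht⟩)
    -- notation
    have hzz : (l.map Prod.fst).zip (l.map Prod.snd) = l := zip_fst_snd l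
    have hstates : (l.map (fun y => zipRun y.1 y.2)).map Run.state =
        l.map (fun y => (Run.state y.1, Run.state y.2)) := by
      rw [List.map_map]
      exact List.map_congr_left (fun y _ => state_zipRun y.1 y.2)
    have hargs' : ρ1.args.zip ρ2.args = l.map (fun y => (Run.state y.1, Run.state y.2)) := by
      rw [show (pairRule ρ1 ρ2).args = ρ1.args.zip ρ2.args from rfl] at hargs
      rw [hargs, hstates]
    have e1 : ρ1.args = l.map (fun y => Run.state y.1) := by
      have := congrArg (List.map Prod.fst) hargs'
      rw [List.map_fst_zip (le_of_eq hlenargs), List.map_map] at this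
      exact this
    have e2 : ρ2.args = l.map (fun y => Run.state y.2) := by
      have := congrArg (List.map Prod.snd) hargs'
      rw [List.map_snd_zip (ge_of_eq hlenargs), List.map_map] at this
      exact this
    -- index transfer
    have hget1 : ∀ (k : ℕ) (u : Run F Q1), (l.map Prod.fst)[k]? = some u →
        ∃ y, l[k]? = some y ∧ y.1 = u ∧ y ∈ l := by
      intro k u hk
      obtain ⟨y, hy, h⟩ := get?_map_some.mp hk
      exact ⟨y, hy, h, List.mem_of_getElem? hy⟩
    have hget2 : ∀ (k : ℕ) (v : Run F Q2), (l.map Prod.snd)[k]? = some v →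
        ∃ y, l[k]? = some y ∧ y.2 = v ∧ y ∈ l := by
      intro k v hk
      obtain ⟨y, hy, h⟩ := get?_map_some.mp hk
      exact ⟨y, hy, h, List.mem_of_getElem? hy⟩
    have hgetz : ∀ (k : ℕ) (y : Run F Q1 × Run F Q2), l[k]? = some y →
        (l.map (fun y => zipRun y.1 y.2))[k]? = some (zipRun y.1 y.2) := by
      intro k y hy
      rw [List.getElem?_map, hy]
      rfl
    refine ⟨RTerm.node ρ1 (l.map Prod.fst), RTerm.node ρ2 (l.map Prod.snd), ?_, ?_, ?_, ?_⟩
    · refine IsRun.node hρ1 ?_ ?_ ?_ ?_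
      · rw [e1, List.map_map]; rfl
      · intro u hu
        rw [List.mem_map] at hu
        obtain ⟨y, hy, rfl⟩ := hu
        exact (hQ y hy).1
      · intro i j ri rj hij hgi hgj
        obtain ⟨yi, hyi, hyi1, hyim⟩ := hget1 _ _ hgi
        obtain ⟨yj, hyj, hyj1, hyjm⟩ := hget1 _ _ hgj
        have := hbe i j _ _ (List.mem_append_left _ hij) (hgetz _ _ hyi) (hgetz _ _ hyj)
        rw [term_zipRun _ _ (hQ yi hyim).2.2, term_zipRun _ _ (hQ yj hyjm).2.2] at this
        rw [← hyi1, ← hyj1]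
        exact this
      · intro i j ri rj hij hgi hgj
        obtain ⟨yi, hyi, hyi1, hyim⟩ := hget1 _ _ hgi
        obtain ⟨yj, hyj, hyj1, hyjm⟩ := hget1 _ _ hgj
        have := hbn i j _ _ (List.mem_append_left _ hij) (hgetz _ _ hyi) (hgetz _ _ hyj)
        rw [term_zipRun _ _ (hQ yi hyim).2.2, term_zipRun _ _ (hQ yj hyjm).2.2] at this
        rw [← hyi1, ← hyj1]
        exact this
    · refine IsRun.node hρ2 ?_ ?_ ?_ ?_
      · rw [e2, List.map_map]; rfl
      · intro v hv
        rw [List.mem_map] at hv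
        obtain ⟨y, hy, rfl⟩ := hv
        exact (hQ y hy).2.1
      · intro i j ri rj hij hgi hgj
        obtain ⟨yi, hyi, hyi2, hyim⟩ := hget2 _ _ hgi
        obtain ⟨yj, hyj, hyj2, hyjm⟩ := hget2 _ _ hgj
        have := hbe i j _ _ (List.mem_append_right _ hij) (hgetz _ _ hyi) (hgetz _ _ hyj)
        rw [term_zipRun _ _ (hQ yi hyim).2.2, term_zipRun _ _ (hQ yj hyjm).2.2,
          (hQ yi hyim).2.2, (hQ yj hyjm).2.2] at this
        rw [← hyi2, ← hyj2]
        exact this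
      · intro i j ri rj hij hgi hgj
        obtain ⟨yi, hyi, hyi2, hyim⟩ := hget2 _ _ hgi
        obtain ⟨yj, hyj, hyj2, hyjm⟩ := hget2 _ _ hgj
        have := hbn i j _ _ (List.mem_append_right _ hij) (hgetz _ _ hyi) (hgetz _ _ hyj)
        rw [term_zipRun _ _ (hQ yi hyim).2.2, term_zipRun _ _ (hQ yj hyjm).2.2,
          (hQ yi hyim).2.2, (hQ yj hyjm).2.2] at this
        rw [← hyi2, ← hyj2]
        exact this
    · rw [term_node, term_node]
      rw [hsym]
      congr 1
      rw [List.map_map, List.map_map]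
      exact List.map_congr_left (fun y hy => (hQ y hy).2.2)
    · rw [zipRun_node, hzz]

open RTerm

end Struct

/-- TABG languages modulo the same equational theory are
effectively closed under intersection. -/
theorem tabg_intersection {F Q1 Q2 : Type} (A1 : TABG F Q1) (A2 : TABG F Q2)
    (hwf1 : A1.WF) (hwf2 : A2.WF)
    (ha1 : A1.gc.AtomsAre GAtom.IsEqNeq) (ha2 : A2.gc.AtomsAre GAtom.IsEqNeq)
    (har : A2.arity = A1.arity) (heq : A2.eqs = A1.eqs) :
    ∃ A : TABG F (Q1 × Q2), A.WF ∧ A.arity = A1.arity ∧ A.eqs = A1.eqs ∧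
      A.gc.AtomsAre GAtom.IsEqNeq ∧ A.Lang = A1.Lang ∩ A2.Lang := by
  classical
  set S1 : List Q1 := A1.stQ.toList with hS1
  set S2 : List Q2 := A2.stQ.toList with hS2
  set prodRules : List (Rule F (Q1 × Q2)) := A1.rules.flatMap (fun ρ1 =>
    A2.rules.flatMap (fun ρ2 =>
      if ρ1.sym = ρ2.sym ∧ ρ1.args.length = ρ2.args.length then [pairRule ρ1 ρ2] else []))
    with hprod
  have hmem : ∀ ρ : Rule F (Q1 × Q2), ρ ∈ prodRules ↔
      ∃ ρ1, ρ1 ∈ A1.rules ∧ ∃ ρ2, ρ2 ∈ A2.rules ∧ ρ1.sym = ρ2.sym ∧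
        ρ1.args.length = ρ2.args.length ∧ ρ = pairRule ρ1 ρ2 := by
    intro ρ
    rw [hprod]
    simp only [List.mem_flatMap]
    constructor
    · rintro ⟨ρ1, h1, ρ2, h2, hin⟩
      split at hin
      · next hcond =>
        simp only [List.mem_singleton] at hin
        exact ⟨ρ1, h1, ρ2, h2, hcond.1, hcond.2, hin⟩
      · simp at hin
    · rintro ⟨ρ1, h1, ρ2, h2, hsym, hlen, rfl⟩
      refine ⟨ρ1, h1, ρ2, h2, ?_⟩
      rw [if_pos ⟨hsym, hlen⟩]
      simp
  refine ⟨{ arity := A1.arity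
            stQ := A1.stQ ×ˢ A2.stQ
            rules := prodRules
            final := A1.final.flatMap (fun q1 => A2.final.map (fun q2 => (q1, q2)))
            eqs := A1.eqs
            gc := GC.and (liftGC S2 (fun q a => (q, a)) A1.gc)
                         (liftGC S1 (fun q a => (a, q)) A2.gc) }, ?_, rfl, rfl, ?_, ?_⟩
  · -- WF
    refine ⟨hwf1.1, ?_, ?_⟩
    · intro ρ hρ
      obtain ⟨ρ1, h1, ρ2, h2, hsym, hlen, rfl⟩ := (hmem ρ).mp hρ
      obtain ⟨w1len, w1res, w1args, w1be, w1bn⟩ := hwf1.2.1 ρ1 h1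
      obtain ⟨w2len, w2res, w2args, w2be, w2bn⟩ := hwf2.2.1 ρ2 h2
      have hzlen : (pairRule ρ1 ρ2).args.length = ρ1.args.length := by
        show (ρ1.args.zip ρ2.args).length = _
        rw [List.length_zip, hlen, min_self]
      refine ⟨by rw [hzlen]; exact w1len, Finset.mem_product.mpr ⟨w1res, w2res⟩, ?_, ?_, ?_⟩
      · intro q hq
        have := List.of_mem_zip hq
        exact Finset.mem_product.mpr ⟨w1args _ this.1, w2args _ this.2⟩
      · intro ij hij
        rcases List.mem_append.mp hij with h | h
        · have := w1be ij h
          rw [hzlen]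
          exact this
        · have := w2be ij h
          rw [hzlen, hlen]
          exact this
      · intro ij hij
        rcases List.mem_append.mp hij with h | h
        · have := w1bn ij h
          rw [hzlen]
          exact this
        · have := w2bn ij h
          rw [hzlen, hlen]
          exact this
    · intro q hq
      simp only [List.mem_flatMap, List.mem_map] at hq
      obtain ⟨q1, hq1, q2, hq2, rfl⟩ := hq
      exact Finset.mem_product.mpr ⟨hwf1.2.2 _ hq1, hwf2.2.2 _ hq2⟩
  · -- AtomsAre
    exact ⟨atomsAre_liftGC _ _ _, atomsAre_liftGC _ _ _⟩
  · -- Language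
    have hstq1 : ∀ (r1 : Run F Q1), IsRun A1.rules A1.eqs r1 →
        ∀ p s, SubAt r1 p s → Run.state s ∈ A1.stQ := by
      intro r1 hr p s hs
      cases isRun_subAt hr hs with
      | node hρ _ _ _ _ => exact (hwf1.2.1 _ hρ).2.1
    have hstq2 : ∀ (r2 : Run F Q2), IsRun A2.rules A1.eqs r2 →
        ∀ p s, SubAt r2 p s → Run.state s ∈ A2.stQ := by
      intro r2 hr p s hs
      cases isRun_subAt hr hs with
      | node hρ _ _ _ _ => exact (hwf2.2.1 _ hρ).2.1
    -- satisfaction transfer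
    have hsatiff : ∀ (r1 : Run F Q1) (r2 : Run F Q2), IsRun A1.rules A1.eqs r1 →
        IsRun A2.rules A1.eqs r2 → Run.term r1 = Run.term r2 →
        (satGC A1.eqs Rule.res Rule.sym (zipRun r1 r2)
            (GC.and (liftGC S2 (fun q a => (q, a)) A1.gc)
                    (liftGC S1 (fun q a => (a, q)) A2.gc)) ↔
          (satGC A1.eqs Rule.res Rule.sym r1 A1.gc ∧
           satGC A1.eqs Rule.res Rule.sym r2 A2.gc)) := by
      intro r1 r2 h1 h2 hterm
      have hsub2 : ∀ p (s0 : Run F Q1), SubAt r1 p s0 →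
          ∃ s2, SubAt r2 p s2 ∧ Run.term s0 = Run.term s2 := by
        intro p s0 hs0
        have h : SubAt (Run.term r2) p (Run.term s0) := by
          rw [← hterm]; exact subAt_map Rule.sym hs0
        obtain ⟨s2, hs2, he⟩ := subAt_map_inv Rule.sym h
        exact ⟨s2, hs2, he⟩
      have hsub1 : ∀ p (s0 : Run F Q2), SubAt r2 p s0 →
          ∃ s1, SubAt r1 p s1 ∧ Run.term s1 = Run.term s0 := by
        intro p s0 hs0
        have h : SubAt (Run.term r1) p (Run.term s0) := by
          rw [hterm]; exact subAt_map Rule.sym hs0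
        obtain ⟨s1, hs1, he⟩ := subAt_map_inv Rule.sym h
        exact ⟨s1, hs1, he.symm⟩
      show (_ ∧ _) ↔ _
      apply and_congr
      · refine satGC_lift_iff A1.eqs S2 (fun q a => (q, a)) Prod.fst (fun _ _ => rfl)
          (zipRun r1 r2) r1 ?_ ?_ A1.gc ha1
        · intro p s hs
          obtain ⟨s1, s2, hsa, hsb, rfl⟩ := subAt_zipRun_inv hs
          exact ⟨s1, hsa, by rw [state_zipRun],
            term_zipRun _ _ (term_eq_of_subAt hterm hsa hsb)⟩
        · intro p s0 hs0
          obtain ⟨s2, hs2, he⟩ := hsub2 p s0 hs0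
          refine ⟨zipRun s0 s2, Run.state s2, subAt_zipRun hs0 hs2,
            Finset.mem_toList.mpr (hstq2 r2 h2 p s2 hs2), ?_, term_zipRun _ _ he⟩
          rw [state_zipRun]
      · refine satGC_lift_iff A1.eqs S1 (fun q a => (a, q)) Prod.snd (fun _ _ => rfl)
          (zipRun r1 r2) r2 ?_ ?_ A2.gc ha2
        · intro p s hs
          obtain ⟨s1, s2, hsa, hsb, rfl⟩ := subAt_zipRun_inv hs
          have he := term_eq_of_subAt hterm hsa hsb
          refine ⟨s2, hsb, by rw [state_zipRun], ?_⟩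
          rw [term_zipRun _ _ he, he]
        · intro p s0 hs0
          obtain ⟨s1, hs1, he⟩ := hsub1 p s0 hs0
          refine ⟨zipRun s1 s0, Run.state s1, subAt_zipRun hs1 hs0,
            Finset.mem_toList.mpr (hstq1 r1 h1 p s1 hs1), ?_, ?_⟩
          · rw [state_zipRun]
          · rw [term_zipRun _ _ he, he]
    ext t
    simp only [TABG.Lang, TABG.IsAccRun, Set.mem_setOf_eq, Set.mem_inter_iff]
    constructor
    · rintro ⟨r, ⟨hrun, hsat, hfin⟩, rfl⟩
      obtain ⟨r1, r2, h1, h2, hterm, rfl⟩ := unzip_isRun (fun ρ hρ => (hmem ρ).mp hρ) hrun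
      have h2' : IsRun A2.rules A2.eqs r2 := by rw [heq]; exact h2
      have hstr : Run.state (zipRun r1 r2) = (Run.state r1, Run.state r2) :=
        state_zipRun r1 r2
      rw [hstr] at hfin
      simp only [List.mem_flatMap, List.mem_map] at hfin
      obtain ⟨q1, hq1, q2, hq2, hpair⟩ := hfin
      obtain ⟨e1, e2⟩ := Prod.mk.injEq .. ▸ hpair
      have hsats := (hsatiff r1 r2 h1 h2 hterm).mp hsat
      constructor
      · exact ⟨r1, ⟨h1, hsats.1, by rw [← e1]; exact hq1⟩,
          (term_zipRun r1 r2 hterm).symm⟩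
      · refine ⟨r2, ⟨h2', ?_, by rw [← e2]; exact hq2⟩, ?_⟩
        · rw [heq]; exact hsats.2
        · rw [term_zipRun r1 r2 hterm, hterm]
    · rintro ⟨⟨r1, ⟨h1, hs1, hf1⟩, rfl⟩, ⟨r2, ⟨h2, hs2, hf2⟩, ht2⟩⟩
      have h2' : IsRun A2.rules A1.eqs r2 := by rw [← heq]; exact h2
      have hterm : Run.term r1 = Run.term r2 := ht2.symm
      refine ⟨zipRun r1 r2, ⟨?_, ?_, ?_⟩, term_zipRun r1 r2 hterm⟩
      · exact zip_isRun (fun ρ1 hρ1 ρ2 hρ2 hsym hlen =>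
          (hmem _).mpr ⟨ρ1, hρ1, ρ2, hρ2, hsym, hlen, rfl⟩) r1 r2 h1 h2' hterm
      · refine (hsatiff r1 r2 h1 h2' hterm).mpr ⟨hs1, ?_⟩
        rw [← heq]; exact hs2
      · rw [state_zipRun]
        simp only [List.mem_flatMap, List.mem_map]
        exact ⟨_, hf1, _, hf2, rfl⟩

end TreeAut
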